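/- Let s > 0 and let P satisfy H1 and H2. Fix x₀ > 0 and 0 < ε < γ_c(x₀), set R = ε·(1 + 2·γ_c(x₀) − ε) / (s·(γ_c(x₀) − ε)) > 0, and let γ be a positive solution of the Dyson–Schwinger ODE on [x₀, b) with γ(x₀) = γ_c(x₀) − ε. Then γ(x) ≤ γ_c(x₀) − ε − R·ln(x/x₀) for all x ∈ [x₀, b), and consequently b ≤ x₀·exp( (γ_c(x₀) − ε)/R ) < ∞; in particular there is no positive solution on all of [x₀, ∞) starting strictly below the nullcline. -/

import Mathlib

open Real MeasureTheory Filter Set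

noncomputable section

/-- `γ` is a positive solution of the Dyson–Schwinger ODE
`γ'(x) = (γ(x) + γ(x)² − P(x)) / (s·x·γ(x))` on the set `I`. -/
def IsDSSolution (s : ℝ) (P γ : ℝ → ℝ) (I : Set ℝ) : Prop :=
  (∀ x ∈ I, 0 < γ x) ∧
    ∀ x ∈ I, HasDerivWithinAt γ ((γ x + (γ x) ^ 2 - P x) / (s * x * γ x)) I x

/-- Hypothesis H1: `P` is twice continuously differentiable on `[0,∞)`,
`P 0 = 0`, and `P x > 0` for `x > 0`. -/
def H1 (P : ℝ → ℝ) : Prop :=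
  ContDiffOn ℝ 2 P (Set.Ici 0) ∧ P 0 = 0 ∧ ∀ x > (0 : ℝ), 0 < P x

/-- Hypothesis H2: `P` is strictly increasing on `[0,∞)`. -/
def H2 (P : ℝ → ℝ) : Prop := StrictMonoOn P (Set.Ici 0)

/-- The nullcline `γ_c(x) = (√(1 + 4 P x) − 1)/2`. -/
def gammaC (P : ℝ → ℝ) (x : ℝ) : ℝ := (Real.sqrt (1 + 4 * P x) - 1) / 2

set_option maxHeartbeats 800000 in
lemma ds_aux (s : ℝ) (hs : 0 < s) (P : ℝ → ℝ) (hP1 : H1 P) (hP2 : H2 P)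
    (x₀ ε : ℝ) (hx₀ : 0 < x₀) (hε : 0 < ε) (hε' : ε < gammaC P x₀)
    (R : ℝ) (hR : R = ε * (1 + 2 * gammaC P x₀ - ε) / (s * (gammaC P x₀ - ε)))
    (b : ℝ) (γ : ℝ → ℝ) (hγ : IsDSSolution s P γ (Set.Ico x₀ b))
    (hinit : γ x₀ = gammaC P x₀ - ε) :
    0 < R ∧
    (∀ x ∈ Set.Ico x₀ b, γ x ≤ gammaC P x₀ - ε - R * Real.log (x / x₀)) ∧
    b ≤ x₀ * Real.exp ((gammaC P x₀ - ε) / R) := by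
  set g := gammaC P x₀ with hg
  have hPx₀ : 0 < P x₀ := hP1.2.2 x₀ hx₀
  have hsq : Real.sqrt (1 + 4 * P x₀) ^ 2 = 1 + 4 * P x₀ := Real.sq_sqrt (by positivity)
  have hgP : g ^ 2 + g = P x₀ := by
    rw [hg]; unfold gammaC; field_simp; nlinarith [hsq]
  have hgpos : 0 < g := lt_trans hε hε'
  have hge : 0 < g - ε := sub_pos.2 hε'
  have h12g : 0 < 1 + 2 * g - ε := by linarith
  have hRpos : 0 < R := by rw [hR]; positivity
  set f' : ℝ → ℝ := fun x => (γ x + (γ x) ^ 2 - P x) / (s * x * γ x) with hf'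
  have hderiv : ∀ x ∈ Set.Ico x₀ b, HasDerivWithinAt γ (f' x) (Set.Ici x) x := by
    intro x hx
    exact (hγ.2 x hx).mono_of_mem_nhdsWithin (mem_nhdsWithin.2 ⟨Set.Iio b, isOpen_Iio, hx.2,
      fun y hy => ⟨le_trans hx.1 hy.2, hy.1⟩⟩)
  have hcont : ContinuousOn γ (Set.Ico x₀ b) := fun x hx => (hγ.2 x hx).continuousWithinAt
  have hPmono : ∀ x, x₀ ≤ x → P x₀ ≤ P x := fun x hx =>
    hP2.monotoneOn (Set.mem_Ici.2 hx₀.le) (Set.mem_Ici.2 (le_trans hx₀.le hx)) hx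
  -- Step 1 : γ stays below g - ε
  have step1 : ∀ x ∈ Set.Ico x₀ b, γ x ≤ g - ε := by
    intro x₁ hx₁
    have hsub : Set.Icc x₀ x₁ ⊆ Set.Ico x₀ b := fun y hy => ⟨hy.1, lt_of_le_of_lt hy.2 hx₁.2⟩
    have hsub' : Set.Ico x₀ x₁ ⊆ Set.Ico x₀ b := fun y hy => ⟨hy.1, lt_trans hy.2 hx₁.2⟩
    refine image_le_of_deriv_right_lt_deriv_boundary' (f' := f') (B := fun _ => g - ε)
      (B' := fun _ => 0) (hcont.mono hsub) (fun x hx => hderiv x (hsub' hx))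
      (le_of_eq hinit) continuousOn_const
      (fun x hx => hasDerivWithinAt_const x _ _)
      ?_ (Set.right_mem_Icc.2 hx₁.1)
    intro x hx hcontact
    have hc : γ x = g - ε := hcontact
    have hxm : x ∈ Set.Ico x₀ b := hsub' hx
    have hγx : 0 < γ x := hγ.1 x hxm
    have hxpos : 0 < x := lt_of_lt_of_le hx₀ hx.1
    have hnum : γ x + (γ x) ^ 2 - P x < 0 := by
      rw [hc]
      nlinarith [hgP, hPmono x hx.1, mul_pos hε h12g]
    exact div_neg_of_neg_of_pos hnum (by positivity)
  -- Step 2 : logarithmic barrier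
  have step2 : ∀ x ∈ Set.Ico x₀ b, γ x ≤ g - ε - R * Real.log (x / x₀) := by
    intro x₁ hx₁
    have hsub : Set.Icc x₀ x₁ ⊆ Set.Ico x₀ b := fun y hy => ⟨hy.1, lt_of_le_of_lt hy.2 hx₁.2⟩
    have hsub' : Set.Ico x₀ x₁ ⊆ Set.Ico x₀ b := fun y hy => ⟨hy.1, lt_trans hy.2 hx₁.2⟩
    have hBderiv : ∀ x, x₀ ≤ x →
        HasDerivAt (fun y => g - ε - R * Real.log (y / x₀)) (-(R / x)) x := by
      intro x hx
      have hxpos : 0 < x := lt_of_lt_of_le hx₀ hx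
      have h1 : HasDerivAt (fun y : ℝ => y / x₀) (1 / x₀) x := (hasDerivAt_id x).div_const x₀
      have h2 := h1.log (by positivity)
      have h3 := (hasDerivAt_const x (g - ε)).sub (h2.const_mul R)
      refine h3.congr_deriv ?_
      field_simp
      ring
    have bound : ∀ x ∈ Set.Ico x₀ x₁, f' x ≤ -(R / x) := by
      intro x hx
      have hxm : x ∈ Set.Ico x₀ b := hsub' hx
      have hu : γ x ≤ g - ε := step1 x hxm
      have hupos : 0 < γ x := hγ.1 x hxm
      have hxpos : 0 < x := lt_of_lt_of_le hx₀ hx.1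
      have hPx : P x₀ ≤ P x := hPmono x hx.1
      set u := γ x with hu'
      have hA : u + u ^ 2 - P x ≤ -(ε * (1 + u + g)) := by
        nlinarith [mul_nonneg (sub_nonneg.2 hu) (by linarith : (0:ℝ) ≤ 1 + u + g), hgP]
      have hB : (1 + 2 * g - ε) * u ≤ (1 + u + g) * (g - ε) := by
        nlinarith [mul_nonneg (sub_nonneg.2 hu) (by linarith : (0:ℝ) ≤ 1 + g)]
      have hR2 : R * (s * (g - ε)) = ε * (1 + 2 * g - ε) := by
        rw [hR]; field_simp
      have hC : R * s * u ≤ ε * (1 + u + g) := by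
        rw [← mul_le_mul_iff_of_pos_right hge]
        calc R * s * u * (g - ε) = R * (s * (g - ε)) * u := by ring
          _ = ε * (1 + 2 * g - ε) * u := by rw [hR2]
          _ ≤ ε * (1 + u + g) * (g - ε) := by
              nlinarith [mul_le_mul_of_nonneg_left hB hε.le]
      have hden : 0 < s * x * u := by positivity
      have target : (u + u ^ 2 - P x) / (s * x * u) ≤ (-R) / x := by
        rw [div_le_div_iff₀ hden hxpos]
        have h1 := mul_le_mul_of_nonneg_right hA hxpos.le
        have h2 := mul_le_mul_of_nonneg_right hC hxpos.le
        linarith [h1, h2]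
      rw [neg_div] at target
      exact target
    have key := image_le_of_deriv_right_le_deriv_boundary
      (f' := f') (B := fun y => g - ε - R * Real.log (y / x₀)) (B' := fun y => -(R / y))
      (hcont.mono hsub) (fun x hx => hderiv x (hsub' hx))
      (by show γ x₀ ≤ g - ε - R * Real.log (x₀ / x₀)
          rw [hinit, div_self hx₀.ne', Real.log_one]; simp)
      (fun x hx => (hBderiv x hx.1).continuousAt.continuousWithinAt)
      (fun x hx => (hBderiv x hx.1).hasDerivWithinAt)
      bound (Set.right_mem_Icc.2 hx₁.1)
    exact key
  refine ⟨hRpos, step2, ?_⟩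
  by_contra hb
  push_neg at hb
  set M := x₀ * Real.exp ((g - ε) / R) with hM
  have hexp1 : (1 : ℝ) < Real.exp ((g - ε) / R) := by
    have h0 : Real.exp 0 < Real.exp ((g - ε) / R) := Real.exp_lt_exp.2 (by positivity)
    rwa [Real.exp_zero] at h0
  have hMx₀ : x₀ < M := by
    rw [hM]; nth_rewrite 1 [← mul_one x₀]
    exact (mul_lt_mul_iff_right₀ hx₀).2 hexp1
  set x := (M + b) / 2 with hx
  have hxM : M < x := by rw [hx]; linarith
  have hxb : x < b := by rw [hx]; linarith
  have hxmem : x ∈ Set.Ico x₀ b := ⟨by linarith, hxb⟩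
  have h1 := step2 x hxmem
  have h2 := hγ.1 x hxmem
  have hlog : (g - ε) / R < Real.log (x / x₀) := by
    have hxx : Real.exp ((g - ε) / R) < x / x₀ := by
      rw [lt_div_iff₀ hx₀]; rw [hM] at hxM; linarith
    calc (g - ε) / R = Real.log (Real.exp ((g - ε) / R)) := (Real.log_exp _).symm
      _ < Real.log (x / x₀) := Real.log_lt_log (Real.exp_pos _) hxx
  have hfin : g - ε < Real.log (x / x₀) * R := (div_lt_iff₀ hRpos).1 hlog
  linarith [h1, h2, hfin]

theorem stmt_7 (s : ℝ) (hs : 0 < s) (P : ℝ → ℝ) (hP1 : H1 P) (hP2 : H2 P)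
    (x₀ ε : ℝ) (hx₀ : 0 < x₀) (hε : 0 < ε) (hε' : ε < gammaC P x₀)
    (R : ℝ) (hR : R = ε * (1 + 2 * gammaC P x₀ - ε) / (s * (gammaC P x₀ - ε)))
    (b : ℝ) (γ : ℝ → ℝ) (hγ : IsDSSolution s P γ (Set.Ico x₀ b))
    (hinit : γ x₀ = gammaC P x₀ - ε) :
    0 < R ∧
    (∀ x ∈ Set.Ico x₀ b, γ x ≤ gammaC P x₀ - ε - R * Real.log (x / x₀)) ∧
    b ≤ x₀ * Real.exp ((gammaC P x₀ - ε) / R) ∧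
    ¬ ∃ γ' : ℝ → ℝ, IsDSSolution s P γ' (Set.Ici x₀) ∧ γ' x₀ < gammaC P x₀ := by
  obtain ⟨h1, h2, h3⟩ := ds_aux s hs P hP1 hP2 x₀ ε hx₀ hε hε' R hR b γ hγ hinit
  refine ⟨h1, h2, h3, ?_⟩
  rintro ⟨γ', hγ', hlt⟩
  have hpos : 0 < γ' x₀ := hγ'.1 x₀ Set.self_mem_Ici
  set ε₂ := gammaC P x₀ - γ' x₀ with hε₂
  have hε₂pos : 0 < ε₂ := sub_pos.2 hlt
  have hε₂lt : ε₂ < gammaC P x₀ := by rw [hε₂]; linarith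
  set R₂ := ε₂ * (1 + 2 * gammaC P x₀ - ε₂) / (s * (gammaC P x₀ - ε₂)) with hR₂
  set b₂ := x₀ * Real.exp ((gammaC P x₀ - ε₂) / R₂) + 1 with hb₂
  have hsol : IsDSSolution s P γ' (Set.Ico x₀ b₂) :=
    ⟨fun x hx => hγ'.1 x hx.1, fun x hx => (hγ'.2 x hx.1).mono Set.Ico_subset_Ici_self⟩
  have hinit₂ : γ' x₀ = gammaC P x₀ - ε₂ := by rw [hε₂]; ring
  obtain ⟨_, _, h3'⟩ := ds_aux s hs P hP1 hP2 x₀ ε₂ hx₀ hε₂pos hε₂lt R₂ rfl b₂ γ' hsol hinit₂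
  rw [hb₂] at h3'
  linarith
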